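/- Let X̃ be the hereditary closure of a subshift X, ν a non-atomic ergodic S-invariant measure on X with D_ν = D, and κ = ν ∗ B_{q,1−q} ergodic on X̃ for some 0 < q < 1. Let φ̃: X̃ → ℝ be continuous with D^{φ̃}_κ = D^{φ̃}. If (i) P(X̃, φ̃) ≤ (Var φ̃([0]) − log₂(1−q) − Var φ̃([1]))·d + d^{φ̃} − Var φ̃([0]), (ii) sup φ̃([1]) ≥ sup φ̃([0]), and (iii) Var φ̃([1]) ≤ Var φ̃([0]) − log₂(1−q), then κ is not a Gibbs measure for φ̃. -/

import Mathlib

open Filter MeasureTheory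

abbrev FullShift : Type := ℤ → Fin 2

def shift (x : FullShift) : FullShift := fun i => x (i + 1)

def cylinder {n : ℕ} (W : Fin n → Fin 2) : Set FullShift :=
  {x | ∀ i : Fin n, x ((i : ℕ) : ℤ) = W i}

def ones {n : ℕ} (W : Fin n → Fin 2) : ℕ := (Finset.univ.filter fun i => W i = 1).card

def zeros {n : ℕ} (W : Fin n → Fin 2) : ℕ := (Finset.univ.filter fun i => W i = 0).card

noncomputable def birkhoff (φ : FullShift → ℝ) (n : ℕ) (x : FullShift) : ℝ :=
  ∑ i ∈ Finset.range n, φ (shift^[i] x)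

def wordAt (x : FullShift) (n : ℕ) : Fin n → Fin 2 := fun i => x ((i : ℕ) : ℤ)

def hereditaryClosure (X : Set FullShift) : Set FullShift :=
  {y | ∃ x ∈ X, ∀ i : ℤ, y i ≤ x i}

def Qmul (p : FullShift × FullShift) : FullShift := fun i => p.1 i * p.2 i

-- The partition function Z_n(X,φ) = Σ_{W ∈ L_n(X)} 2^{sup_{x∈W∩X} Birkhoff sum}.
open Classical in
noncomputable def Zn (X : Set FullShift) (φ : FullShift → ℝ) (n : ℕ) : ℝ :=
  ∑ W ∈ Finset.univ.filter (fun W : Fin n → Fin 2 => (X ∩ cylinder W).Nonempty),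
    (2 : ℝ) ^ (sSup ((birkhoff φ n) '' (X ∩ cylinder W)))

/-- κ is a Gibbs measure for φ (with pressure constant P) on the subshift Y. -/
def IsGibbs (Y : Set FullShift) (κ : Measure FullShift) (φ : FullShift → ℝ) (P : ℝ) : Prop :=
  ∃ c : ℝ, 0 < c ∧ ∀ (n : ℕ) (x : FullShift), x ∈ Y → 0 < κ (cylinder (wordAt x n)) →
    c⁻¹ ≤ (κ (cylinder (wordAt x n))).toReal / (2 : ℝ) ^ (birkhoff φ n x - n * P) ∧
      (κ (cylinder (wordAt x n))).toReal / (2 : ℝ) ^ (birkhoff φ n x - n * P) ≤ c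

-- ============ basic facts ============
section Basics

lemma fin2_cases (a : Fin 2) : a = 0 ∨ a = 1 := by omega

lemma fin2_ne_one {a : Fin 2} (h : ¬ a = 1) : a = 0 := by omega

lemma fin2_le {a b : Fin 2} (h : a ≤ b) (ha : a = 1) : b = 1 := by
  subst ha; omega

lemma fin2_mul_eq_one {a b : Fin 2} (h : a * b = 1) : a = 1 ∧ b = 1 := by
  rcases fin2_cases a with ha | ha <;> rcases fin2_cases b with hb | hb <;>
    subst ha <;> subst hb <;> simp_all <;> exact absurd h (by decide)

lemma fin2_mul_le_left (a b : Fin 2) : a * b ≤ a := by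
  rcases fin2_cases a with ha | ha <;> rcases fin2_cases b with hb | hb <;>
    subst ha <;> subst hb <;> decide

lemma continuous_shift : Continuous shift :=
  continuous_pi fun i => continuous_apply (i + 1)

lemma measurable_shift : Measurable shift :=
  measurable_pi_lambda _ fun i => measurable_pi_apply (i + 1)

lemma continuous_qmul : Continuous Qmul := by
  apply continuous_pi
  intro i
  exact ((continuous_apply i).comp continuous_fst).mul ((continuous_apply i).comp continuous_snd)

lemma measurable_qmul : Measurable Qmul := by
  apply measurable_pi_lambda
  intro i
  exact (((measurable_pi_apply i).comp measurable_fst).mul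
    ((measurable_pi_apply i).comp measurable_snd))

def shiftInv (x : FullShift) : FullShift := fun i => x (i - 1)

lemma continuous_shiftInv : Continuous shiftInv :=
  continuous_pi fun i => continuous_apply (i - 1)

lemma measurable_shiftInv : Measurable shiftInv :=
  measurable_pi_lambda _ fun i => measurable_pi_apply (i - 1)

lemma shift_shiftInv (x : FullShift) : shift (shiftInv x) = x := by
  funext i; simp [shift, shiftInv]

lemma shiftInv_shift (x : FullShift) : shiftInv (shift x) = x := by
  funext i; simp [shift, shiftInv]

lemma shift_iterate_apply (m : ℕ) (x : FullShift) (j : ℤ) :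
    (shift^[m] x) j = x (j + m) := by
  induction m generalizing x j with
  | zero => simp
  | succ k ih =>
    rw [Function.iterate_succ_apply, ih]
    simp [shift]
    ring_nf

lemma shiftInv_iterate_apply (m : ℕ) (x : FullShift) (j : ℤ) :
    (shiftInv^[m] x) j = x (j - m) := by
  induction m generalizing x j with
  | zero => simp
  | succ k ih =>
    rw [Function.iterate_succ_apply, ih]
    simp [shiftInv]
    ring_nf

lemma isClosed_cylinder {n : ℕ} (W : Fin n → Fin 2) : IsClosed (cylinder W) := by
  have : _root_.cylinder W = ⋂ i : Fin n, (fun x : FullShift => x ((i : ℕ) : ℤ)) ⁻¹' {W i} := by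
    ext x; simp [_root_.cylinder]
  rw [this]
  exact isClosed_iInter fun i => (isClosed_singleton).preimage (continuous_apply _)

lemma measurableSet_cylinder {n : ℕ} (W : Fin n → Fin 2) : MeasurableSet (cylinder W) :=
  (isClosed_cylinder W).measurableSet

lemma mem_cylinder_wordAt (x : FullShift) (n : ℕ) : x ∈ cylinder (wordAt x n) := by
  intro i; rfl

lemma wordAt_eq_of_mem {n : ℕ} {W : Fin n → Fin 2} {x : FullShift} (h : x ∈ cylinder W) :
    wordAt x n = W := by
  funext i; exact h i

lemma cylinder_wordAt_succ_subset (x : FullShift) (n : ℕ) :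
    cylinder (wordAt x (n + 1)) ⊆ cylinder (wordAt x n) := by
  intro y hy i
  exact hy (Fin.castSucc i)

lemma cylinder_wordAt_antitone (x : FullShift) : Antitone (fun n => cylinder (wordAt x n)) := by
  apply antitone_nat_of_succ_le
  intro n
  exact cylinder_wordAt_succ_subset x n

lemma iInter_cylinder_wordAt (x : FullShift) :
    (⋂ n : ℕ, cylinder (wordAt x n)) = {y : FullShift | ∀ i : ℕ, y (i : ℤ) = x (i : ℤ)} := by
  ext y
  simp only [Set.mem_iInter, Set.mem_setOf_eq]
  constructor
  · intro h i
    exact h (i + 1) ⟨i, by omega⟩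
  · intro h n i
    exact h i

end Basics
-- ============ hereditary closure ============
section Hered

variable {X : Set FullShift}

lemma subset_hereditaryClosure : X ⊆ hereditaryClosure X := by
  intro x hx
  exact ⟨x, hx, fun i => le_rfl⟩

lemma zero_mem_hereditaryClosure (hne : X.Nonempty) :
    (fun _ => 0 : FullShift) ∈ hereditaryClosure X := by
  obtain ⟨x, hx⟩ := hne
  exact ⟨x, hx, fun i => Fin.zero_le _⟩

lemma shift_mem_hereditaryClosure (hinv : shift '' X = X) {y : FullShift}
    (hy : y ∈ hereditaryClosure X) : shift y ∈ hereditaryClosure X := by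
  obtain ⟨x, hx, hle⟩ := hy
  refine ⟨shift x, ?_, fun i => hle (i + 1)⟩
  rw [← hinv]
  exact ⟨x, hx, rfl⟩

lemma shift_iterate_mem_hereditaryClosure (hinv : shift '' X = X) {y : FullShift}
    (hy : y ∈ hereditaryClosure X) (m : ℕ) : shift^[m] y ∈ hereditaryClosure X := by
  induction m with
  | zero => exact hy
  | succ k ih => rw [Function.iterate_succ_apply']; exact shift_mem_hereditaryClosure hinv ih

lemma hereditaryClosure_eq_image :
    hereditaryClosure X = Qmul '' (X ×ˢ (Set.univ : Set FullShift)) := by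
  ext y
  constructor
  · rintro ⟨x, hx, hle⟩
    refine ⟨(x, y), ⟨hx, trivial⟩, ?_⟩
    funext i
    show x i * y i = y i
    rcases fin2_cases (y i) with h | h
    · rw [h]; rcases fin2_cases (x i) with h' | h' <;> rw [h'] <;> decide
    · have := fin2_le (hle i) h
      rw [h, this]; decide
  · rintro ⟨⟨x, b⟩, ⟨hx, -⟩, rfl⟩
    exact ⟨x, hx, fun i => fin2_mul_le_left _ _⟩

lemma isCompact_hereditaryClosure (hcl : IsClosed X) : IsCompact (hereditaryClosure X) := by
  rw [hereditaryClosure_eq_image]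
  exact ((hcl.isCompact).prod isClosed_univ.isCompact).image continuous_qmul

lemma measurableSet_hereditaryClosure (hcl : IsClosed X) :
    MeasurableSet (hereditaryClosure X) :=
  (isCompact_hereditaryClosure hcl).isClosed.measurableSet

end Hered

-- ============ word counting ============
section Words

lemma zeros_eq {n : ℕ} (W : Fin n → Fin 2) : zeros W = n - ones W := by
  have := Finset.card_filter_add_card_filter_not (s := (Finset.univ : Finset (Fin n)))
    (fun i => W i = 1)
  have he : (Finset.univ.filter fun i : Fin n => ¬ W i = 1) =
      (Finset.univ.filter fun i : Fin n => W i = 0) := by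
    apply Finset.filter_congr
    intro i _
    constructor
    · intro h; exact fin2_ne_one h
    · intro h; omega
  rw [he] at this
  simp only [Finset.card_univ, Fintype.card_fin] at this
  unfold ones zeros
  omega

lemma ones_le {n : ℕ} (W : Fin n → Fin 2) : ones W ≤ n := by
  have := Finset.card_filter_le (Finset.univ : Finset (Fin n)) (fun i => W i = 1)
  simpa [ones] using this

lemma ones_mono {n : ℕ} {W W' : Fin n → Fin 2} (h : ∀ i, W i ≤ W' i) : ones W ≤ ones W' := by
  apply Finset.card_le_card
  intro i hi
  simp only [Finset.mem_filter, Finset.mem_univ, true_and] at hi ⊢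
  exact fin2_le (h i) hi

lemma ones_wordAt_le_of_le {x x' : FullShift} (h : ∀ i, x i ≤ x' i) (n : ℕ) :
    ones (wordAt x n) ≤ ones (wordAt x' n) :=
  ones_mono fun i => h _

end Words
-- ============ Bernoulli measure computations ============
section Meas

open Classical in
/-- the set of configurations equal to 1 on a given finite window set -/
def Hset {n : ℕ} (S : Finset (Fin n)) : Set FullShift :=
  {b | ∀ i : Fin n, i ∈ S → b ((i : ℕ) : ℤ) = 1}

lemma measurableSet_Hset {n : ℕ} (S : Finset (Fin n)) : MeasurableSet (Hset S) := by
  have : Hset S = ⋂ i ∈ S, (fun b : FullShift => b ((i : ℕ) : ℤ)) ⁻¹' {1} := by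
    ext b; simp [Hset]
  rw [this]
  exact MeasurableSet.biInter (Set.to_countable _)
    (fun i _ => (measurable_pi_apply _) (measurableSet_singleton 1))

open Classical in
noncomputable def piT {n : ℕ} (S : Finset (Fin n)) : Fin n → Finset (Fin 2) :=
  fun i => if i ∈ S then {1} else Finset.univ

lemma Hset_eq_biUnion {n : ℕ} (S : Finset (Fin n)) :
    Hset S = ⋃ U ∈ Fintype.piFinset (piT S), cylinder U := by
  classical
  ext b
  simp only [Set.mem_iUnion]
  constructor
  · intro hb
    refine ⟨wordAt b n, ?_, mem_cylinder_wordAt b n⟩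
    rw [Fintype.mem_piFinset]
    intro i
    unfold piT
    by_cases hi : i ∈ S
    · simp [hi, wordAt, hb i hi]
    · simp [hi]
  · rintro ⟨U, hU, hbU⟩
    intro i hi
    rw [Fintype.mem_piFinset] at hU
    have := hU i
    unfold piT at this
    simp [hi] at this
    rw [hbU i, this]

lemma cylinder_disjoint {n : ℕ} {U U' : Fin n → Fin 2} (h : U ≠ U') :
    Disjoint (cylinder U) (cylinder U') := by
  rw [Set.disjoint_left]
  intro x hx hx'
  apply h
  funext i
  rw [← hx i, ← hx' i]

variable {q : ℝ} (hq0 : 0 < q) (hq1 : q < 1)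
variable {B : Measure FullShift} [IsProbabilityMeasure B]
variable (hB : ∀ (n : ℕ) (W : Fin n → Fin 2),
      (B (cylinder W)).toReal = q ^ zeros W * (1 - q) ^ ones W)

include hB in
lemma B_cyl {n : ℕ} (W : Fin n → Fin 2) :
    B (cylinder W) = ENNReal.ofReal (q ^ zeros W * (1 - q) ^ ones W) := by
  rw [← hB n W, ENNReal.ofReal_toReal (measure_ne_top B _)]

lemma weight_prod {n : ℕ} (W : Fin n → Fin 2) :
    q ^ zeros W * (1 - q) ^ ones W =
      ∏ i : Fin n, (if W i = 1 then (1 - q) else q) := by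
  classical
  rw [← Finset.prod_filter_mul_prod_filter_not Finset.univ (fun i => W i = 1)]
  have h1 : ∏ i ∈ Finset.univ.filter (fun i : Fin n => W i = 1),
      (if W i = 1 then (1 - q) else q) = (1 - q) ^ ones W := by
    rw [Finset.prod_congr rfl (fun i hi => ?_), Finset.prod_const]
    · rfl
    · simp only [Finset.mem_filter] at hi
      simp [hi.2]
  have h2 : ∏ i ∈ Finset.univ.filter (fun i : Fin n => ¬ W i = 1),
      (if W i = 1 then (1 - q) else q) = q ^ zeros W := by
    rw [Finset.prod_congr ?he (fun i hi => ?_), Finset.prod_const]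
    · rfl
    · apply Finset.filter_congr
      intro i _
      constructor
      · intro h; exact fin2_ne_one h
      · intro h; omega
    · simp only [Finset.mem_filter] at hi
      have hne : ¬ W i = 1 := by omega
      simp [hne]
  rw [h1, h2, mul_comm]
include hB in
lemma B_Hset {n : ℕ} (S : Finset (Fin n)) (hq0 : 0 < q) (hq1 : q < 1) :
    B (Hset S) = ENNReal.ofReal ((1 - q) ^ S.card) := by
  classical
  rw [Hset_eq_biUnion]
  rw [measure_biUnion_finset₀ ?hdisj ?hmeas]
  · have : ∀ U ∈ Fintype.piFinset (piT S), B (cylinder U) =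
        ENNReal.ofReal (∏ i : Fin n, (if U i = 1 then (1 - q) else q)) := by
      intro U _
      rw [B_cyl hB, weight_prod]
    rw [Finset.sum_congr rfl this, ← ENNReal.ofReal_sum_of_nonneg ?hnn]
    · congr 1
      rw [← Finset.prod_univ_sum (piT S) (fun i v => if v = 1 then (1 - q) else q)]
      have : ∀ i : Fin n, (∑ v ∈ piT S i, if v = (1 : Fin 2) then (1 - q) else q) =
          (if i ∈ S then (1 - q) else 1) := by
        intro i
        unfold piT
        by_cases hi : i ∈ S
        · simp [hi]
        · simp only [hi, if_false]
          rw [show (Finset.univ : Finset (Fin 2)) = {0, 1} from rfl]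
          rw [Finset.sum_insert (by decide), Finset.sum_singleton]
          norm_num
      rw [Finset.prod_congr rfl (fun i _ => this i)]
      rw [← Finset.prod_filter_mul_prod_filter_not Finset.univ (fun i => i ∈ S)]
      have e1 : ∏ i ∈ Finset.univ.filter (fun i : Fin n => i ∈ S),
          (if i ∈ S then (1 - q) else 1) = (1 - q) ^ S.card := by
        rw [Finset.prod_congr rfl (fun i hi => ?_), Finset.prod_const]
        · congr 1
          simp [Finset.filter_mem_eq_inter]
        · simp only [Finset.mem_filter] at hi
          simp [hi.2]
      have e2 : ∏ i ∈ Finset.univ.filter (fun i : Fin n => ¬ i ∈ S),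
          (if i ∈ S then (1 - q) else 1) = 1 := by
        apply Finset.prod_eq_one
        intro i hi
        simp only [Finset.mem_filter] at hi
        simp [hi.2]
      rw [e1, e2, mul_one]
    · intro U _
      apply Finset.prod_nonneg
      intro i _
      by_cases h : U i = 1 <;> simp [h] <;> linarith
  case hdisj =>
    intro U hU U' hU' hne
    exact (cylinder_disjoint hne).aedisjoint
  case hmeas =>
    intro U _
    exact (measurableSet_cylinder U).nullMeasurableSet

open Classical in
noncomputable def onesSet {n : ℕ} (W : Fin n → Fin 2) : Finset (Fin n) :=
  Finset.univ.filter (fun i => W i = 1)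

lemma onesSet_card {n : ℕ} (W : Fin n → Fin 2) : (onesSet W).card = ones W := by
  unfold onesSet ones; congr 1

variable {ν : Measure FullShift} [IsProbabilityMeasure ν]
variable {κ : Measure FullShift} (hκ : κ = (ν.prod B).map Qmul)

include hκ in
lemma kappa_apply {n : ℕ} (W : Fin n → Fin 2) :
    κ (cylinder W) = (ν.prod B) (Qmul ⁻¹' cylinder W) := by
  rw [hκ, Measure.map_apply measurable_qmul (measurableSet_cylinder W)]

lemma Qmul_preimage_subset {n : ℕ} (W : Fin n → Fin 2) :
    Qmul ⁻¹' cylinder W ⊆ (Hset (onesSet W)) ×ˢ (Hset (onesSet W)) := by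
  rintro ⟨x, b⟩ h
  have h' : ∀ i : Fin n, x ((i:ℕ):ℤ) * b ((i:ℕ):ℤ) = W i := h
  constructor
  · intro i hi
    simp only [onesSet, Finset.mem_filter] at hi
    exact (fin2_mul_eq_one (by rw [h' i, hi.2])).1
  · intro i hi
    simp only [onesSet, Finset.mem_filter] at hi
    exact (fin2_mul_eq_one (by rw [h' i, hi.2])).2

include hκ hB in
lemma kappa_cyl_le_B {n : ℕ} (W : Fin n → Fin 2) (hq0 : 0 < q) (hq1 : q < 1) :
    κ (cylinder W) ≤ ENNReal.ofReal ((1 - q) ^ ones W) := by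
  rw [kappa_apply hκ]
  calc (ν.prod B) (Qmul ⁻¹' cylinder W)
      ≤ (ν.prod B) ((Set.univ : Set FullShift) ×ˢ (Hset (onesSet W))) := by
        apply measure_mono
        exact (Qmul_preimage_subset W).trans
          (Set.prod_mono (Set.subset_univ _) subset_rfl)
    _ = ν Set.univ * B (Hset (onesSet W)) := Measure.prod_prod _ _
    _ = ENNReal.ofReal ((1 - q) ^ ones W) := by
        rw [measure_univ, one_mul, B_Hset hB _ hq0 hq1, onesSet_card]

lemma nu_Hset_le {n : ℕ} (W : Fin n → Fin 2)
    (hmax : ∀ U : Fin n → Fin 2, ones W < ones U → ν (cylinder U) = 0) :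
    ν (Hset (onesSet W)) ≤ ν (cylinder W) := by
  classical
  rw [Hset_eq_biUnion]
  rw [measure_biUnion_finset₀ (fun U _ U' _ hne => (cylinder_disjoint hne).aedisjoint)
    (fun U _ => (measurableSet_cylinder U).nullMeasurableSet)]
  have hWmem : W ∈ Fintype.piFinset (piT (onesSet W)) := by
    rw [Fintype.mem_piFinset]
    intro i
    unfold piT
    by_cases hi : i ∈ onesSet W
    · simp only [hi, if_true, Finset.mem_singleton]
      simpa [onesSet] using hi
    · simp [hi]
  rw [Finset.sum_eq_single_of_mem W hWmem]
  intro U hU hne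
  apply hmax
  have hsub : onesSet W ⊆ onesSet U := by
    intro i hi
    rw [Fintype.mem_piFinset] at hU
    have := hU i
    unfold piT at this
    simp only [hi, if_true, Finset.mem_singleton] at this
    simp [onesSet, this]
  have hstrict : onesSet W ⊂ onesSet U := by
    refine ⟨hsub, ?_⟩
    intro hsub'
    apply hne
    funext i
    by_cases hi : i ∈ onesSet W
    · have h1 : W i = 1 := by simpa [onesSet] using hi
      have h2 : U i = 1 := by
        rw [Fintype.mem_piFinset] at hU
        have := hU i
        unfold piT at this
        simpa [hi] using this
      rw [h1, h2]
    · have h1 : W i = 0 := by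
        have : ¬ W i = 1 := by simpa [onesSet] using hi
        omega
      have h2 : U i = 0 := by
        have : i ∉ onesSet U := fun h => hi (hsub' h)
        have : ¬ U i = 1 := by simpa [onesSet] using this
        omega
      rw [h1, h2]
  rw [← onesSet_card, ← onesSet_card]
  exact Finset.card_lt_card hstrict

include hκ hB in
lemma kappa_cyl_le_nu {n : ℕ} (W : Fin n → Fin 2) (hq0 : 0 < q) (hq1 : q < 1)
    (hmax : ∀ U : Fin n → Fin 2, ones W < ones U → ν (cylinder U) = 0) :
    κ (cylinder W) ≤ ν (cylinder W) * ENNReal.ofReal ((1 - q) ^ ones W) := by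
  rw [kappa_apply hκ]
  calc (ν.prod B) (Qmul ⁻¹' cylinder W)
      ≤ (ν.prod B) ((Hset (onesSet W)) ×ˢ (Hset (onesSet W))) :=
        measure_mono (Qmul_preimage_subset W)
    _ = ν (Hset (onesSet W)) * B (Hset (onesSet W)) := Measure.prod_prod _ _
    _ ≤ ν (cylinder W) * ENNReal.ofReal ((1 - q) ^ ones W) := by
        apply mul_le_mul'
        · exact nu_Hset_le W hmax
        · rw [B_Hset hB _ hq0 hq1, onesSet_card]

include hκ hB in
lemma kappa_cyl_pos {n : ℕ} (W : Fin n → Fin 2) (hq1 : q < 1)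
    (hν : 0 < ν (cylinder W)) : 0 < κ (cylinder W) := by
  rw [kappa_apply hκ]
  have hsub : (cylinder W) ×ˢ (cylinder (fun _ : Fin n => (1 : Fin 2))) ⊆
      Qmul ⁻¹' cylinder W := by
    rintro ⟨x, b⟩ ⟨hx, hb⟩
    intro i
    show x ((i:ℕ):ℤ) * b ((i:ℕ):ℤ) = W i
    have hb' : b ((i:ℕ):ℤ) = 1 := hb i
    have hx' : x ((i:ℕ):ℤ) = W i := hx i
    rw [hb', mul_one, hx']
  calc (0 : ENNReal) < ν (cylinder W) * B (cylinder (fun _ : Fin n => (1 : Fin 2))) := by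
        apply ENNReal.mul_pos (ne_of_gt hν)
        rw [B_cyl hB]
        simp only [ne_eq, ENNReal.ofReal_eq_zero, not_le]
        have h1 : ones (fun _ : Fin n => (1 : Fin 2)) = n := by
          unfold ones; simp
        have h0 : zeros (fun _ : Fin n => (1 : Fin 2)) = 0 := by
          rw [zeros_eq, h1]; omega
        rw [h1, h0]
        have : 0 < 1 - q := by linarith
        positivity
    _ = (ν.prod B) ((cylinder W) ×ˢ (cylinder (fun _ : Fin n => (1 : Fin 2)))) :=
        (Measure.prod_prod _ _).symm
    _ ≤ (ν.prod B) (Qmul ⁻¹' cylinder W) := measure_mono hsub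

include hκ hB in
lemma kappa_zero_word_pos (n : ℕ) (hq0 : 0 < q) :
    0 < κ (cylinder (fun _ : Fin n => (0 : Fin 2))) := by
  rw [kappa_apply hκ]
  have hsub : (Set.univ : Set FullShift) ×ˢ (cylinder (fun _ : Fin n => (0 : Fin 2))) ⊆
      Qmul ⁻¹' cylinder (fun _ : Fin n => (0 : Fin 2)) := by
    rintro ⟨x, b⟩ ⟨-, hb⟩
    intro i
    show x ((i:ℕ):ℤ) * b ((i:ℕ):ℤ) = 0
    have hb' : b ((i:ℕ):ℤ) = 0 := hb i
    rw [hb', mul_zero]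
  calc (0 : ENNReal) < ν Set.univ * B (cylinder (fun _ : Fin n => (0 : Fin 2))) := by
        apply ENNReal.mul_pos (by simp)
        rw [B_cyl hB]
        simp only [ne_eq, ENNReal.ofReal_eq_zero, not_le]
        have h1 : ones (fun _ : Fin n => (0 : Fin 2)) = 0 := by
          unfold ones; simp
        have h0 : zeros (fun _ : Fin n => (0 : Fin 2)) = n := by
          rw [zeros_eq, h1]; omega
        rw [h1, h0]
        positivity
    _ = (ν.prod B) ((Set.univ : Set FullShift) ×ˢ (cylinder (fun _ : Fin n => (0 : Fin 2)))) :=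
        (Measure.prod_prod _ _).symm
    _ ≤ _ := measure_mono hsub

include hκ in
lemma kappa_prob : IsProbabilityMeasure κ := by
  constructor
  rw [hκ, Measure.map_apply measurable_qmul MeasurableSet.univ]
  simp
end Meas
-- ============ maximal number of ones ============
section MaxOnes

open Classical in
/-- maximum of `ones` over words satisfying a predicate -/
noncomputable def maxOnes (Pr : ∀ {n : ℕ}, (Fin n → Fin 2) → Prop) (n : ℕ) : ℕ :=
  (Finset.univ.filter (fun W : Fin n → Fin 2 => Pr W)).sup ones

open Classical in
lemma le_maxOnes {Pr : ∀ {n : ℕ}, (Fin n → Fin 2) → Prop} {n : ℕ} {W : Fin n → Fin 2}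
    (h : Pr W) : ones W ≤ maxOnes Pr n :=
  Finset.le_sup (by simp [h])

open Classical in
lemma exists_maxOnes {Pr : ∀ {n : ℕ}, (Fin n → Fin 2) → Prop} {n : ℕ}
    (h : ∃ W : Fin n → Fin 2, Pr W) :
    ∃ W : Fin n → Fin 2, Pr W ∧ ones W = maxOnes Pr n := by
  classical
  obtain ⟨W0, hW0⟩ := h
  obtain ⟨W, hWmem, hWeq⟩ := Finset.exists_mem_eq_sup
    (Finset.univ.filter (fun W : Fin n → Fin 2 => Pr W)) ⟨W0, by simp [hW0]⟩ ones
  simp only [Finset.mem_filter, Finset.mem_univ, true_and] at hWmem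
  exact ⟨W, hWmem, hWeq.symm⟩

lemma isGreatest_maxOnes {Pr : ∀ {n : ℕ}, (Fin n → Fin 2) → Prop} {n : ℕ}
    (h : ∃ W : Fin n → Fin 2, Pr W) :
    IsGreatest {m : ℝ | ∃ Wd : Fin n → Fin 2, Pr Wd ∧ m = ones Wd}
      ((maxOnes Pr n : ℕ) : ℝ) := by
  constructor
  · obtain ⟨W, hW, hWeq⟩ := exists_maxOnes h
    exact ⟨W, hW, by rw [hWeq]⟩
  · rintro m ⟨Wd, hWd, rfl⟩
    exact_mod_cast le_maxOnes hWd

lemma sSup_maxOnes {Pr : ∀ {n : ℕ}, (Fin n → Fin 2) → Prop} {n : ℕ}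
    (h : ∃ W : Fin n → Fin 2, Pr W) :
    sSup {m : ℝ | ∃ Wd : Fin n → Fin 2, Pr Wd ∧ m = ones Wd} = ((maxOnes Pr n : ℕ) : ℝ) :=
  (isGreatest_maxOnes h).csSup_eq

-- word splitting
lemma ones_eq_sum {n : ℕ} (W : Fin n → Fin 2) :
    ones W = ∑ i : Fin n, (if W i = 1 then 1 else 0) := by
  classical
  unfold ones
  rw [Finset.card_filter]

lemma ones_append {m n : ℕ} (W : Fin (m + n) → Fin 2) :
    ones W = ones (fun i : Fin m => W (Fin.castAdd n i)) +
      ones (fun j : Fin n => W (Fin.natAdd m j)) := by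
  classical
  rw [ones_eq_sum, ones_eq_sum, ones_eq_sum]
  rw [Fin.sum_univ_add]

lemma cylinder_subset_prefix {m n : ℕ} (W : Fin (m + n) → Fin 2) :
    cylinder W ⊆ cylinder (fun i : Fin m => W (Fin.castAdd n i)) := by
  intro x hx i
  have := hx (Fin.castAdd n i)
  simpa using this

lemma cylinder_subset_suffix {m n : ℕ} (W : Fin (m + n) → Fin 2) :
    cylinder W ⊆ shift^[m] ⁻¹' cylinder (fun j : Fin n => W (Fin.natAdd m j)) := by
  intro x hx j
  show (shift^[m] x) ((j : ℕ) : ℤ) = W (Fin.natAdd m j)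
  rw [shift_iterate_apply]
  have := hx (Fin.natAdd m j)
  simpa [add_comm] using this

end MaxOnes
-- ============ ν-maximal ones, Fekete ============
section Knu

variable {ν : Measure FullShift} [IsProbabilityMeasure ν]

lemma exists_pos_word (ν : Measure FullShift) [IsProbabilityMeasure ν] (n : ℕ) :
    ∃ W : Fin n → Fin 2, 0 < ν (cylinder W) := by
  by_contra h
  push_neg at h
  have hz : ∀ W : Fin n → Fin 2, ν (cylinder W) = 0 := fun W => le_antisymm (h W) zero_le
  have hcover : (Set.univ : Set FullShift) ⊆ ⋃ W : Fin n → Fin 2, cylinder W := by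
    intro x _
    exact Set.mem_iUnion.2 ⟨wordAt x n, mem_cylinder_wordAt x n⟩
  have : (1 : ENNReal) ≤ 0 := by
    calc (1 : ENNReal) = ν Set.univ := (measure_univ).symm
      _ ≤ ν (⋃ W : Fin n → Fin 2, cylinder W) := measure_mono hcover
      _ ≤ ∑ W : Fin n → Fin 2, ν (cylinder W) := measure_iUnion_fintype_le _ _
      _ = 0 := by simp [hz]
  simp at this

lemma maxOnes_nu_subadditive (hmp : MeasurePreserving shift ν ν) (m n : ℕ) :
    maxOnes (fun {k} (W : Fin k → Fin 2) => 0 < ν (cylinder W)) (m + n) ≤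
    maxOnes (fun {k} (W : Fin k → Fin 2) => 0 < ν (cylinder W)) m +
    maxOnes (fun {k} (W : Fin k → Fin 2) => 0 < ν (cylinder W)) n := by
  obtain ⟨W, hW, hWeq⟩ := exists_maxOnes (Pr := fun {k} (W : Fin k → Fin 2) => 0 < ν (cylinder W)) (exists_pos_word ν (m + n))
  rw [← hWeq, ones_append]
  have h1 : 0 < ν (cylinder (fun i : Fin m => W (Fin.castAdd n i))) :=
    lt_of_lt_of_le hW (measure_mono (cylinder_subset_prefix W))
  have h2 : 0 < ν (cylinder (fun j : Fin n => W (Fin.natAdd m j))) := by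
    apply lt_of_lt_of_le hW
    calc ν (cylinder W) ≤ ν (shift^[m] ⁻¹' cylinder (fun j : Fin n => W (Fin.natAdd m j))) :=
          measure_mono (cylinder_subset_suffix W)
      _ = ν (cylinder (fun j : Fin n => W (Fin.natAdd m j))) :=
          (hmp.iterate m).measure_preimage (measurableSet_cylinder _).nullMeasurableSet
  exact Nat.add_le_add (le_maxOnes h1) (le_maxOnes h2)

lemma maxOnes_nu_ge (hmp : MeasurePreserving shift ν ν) {Dν D : ℝ}
    (hDν : Filter.Tendsto (fun n : ℕ =>
        sSup {m : ℝ | ∃ Wd : Fin n → Fin 2, 0 < ν (cylinder Wd) ∧ m = (ones Wd : ℝ)} / n)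
      Filter.atTop (nhds Dν))
    (hDνD : Dν = D) (n : ℕ) :
    (n : ℝ) * D ≤ (maxOnes (fun {k} (W : Fin k → Fin 2) => 0 < ν (cylinder W)) n : ℝ) := by
  set u : ℕ → ℝ := fun k =>
    (maxOnes (fun {k} (W : Fin k → Fin 2) => 0 < ν (cylinder W)) k : ℝ) with hu
  have hsub : Subadditive u := by
    intro a b
    have := maxOnes_nu_subadditive hmp a b
    simp only [hu]
    exact_mod_cast this
  have hbdd : BddBelow (Set.range fun k : ℕ => u k / k) := by
    refine ⟨0, ?_⟩
    rintro x ⟨k, rfl⟩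
    positivity
  have heq : (fun k : ℕ =>
      sSup {m : ℝ | ∃ Wd : Fin k → Fin 2, 0 < ν (cylinder Wd) ∧ m = (ones Wd : ℝ)} / k) =
      fun k : ℕ => u k / k := by
    funext k
    rw [sSup_maxOnes (Pr := fun {k} (W : Fin k → Fin 2) => 0 < ν (cylinder W)) (exists_pos_word ν k)]
  rw [heq] at hDν
  have hlim : hsub.lim = D := by
    rw [← hDνD]
    exact tendsto_nhds_unique (hsub.tendsto_lim hbdd) hDν
  rcases Nat.eq_zero_or_pos n with hn | hn
  · subst hn; simp
  · have hne : n ≠ 0 := by omega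
    have hdiv := hsub.lim_le_div hbdd hne
    rw [hlim] at hdiv
    have hnpos : (0:ℝ) < n := by exact_mod_cast hn
    calc (n : ℝ) * D ≤ (n : ℝ) * (u n / n) := by
          apply mul_le_mul_of_nonneg_left hdiv (le_of_lt hnpos)
      _ = u n := by field_simp
end Knu
-- ============ frequency of ones vs maximal words ============
section Freq

lemma mem_oneCyl_iff {y : FullShift} :
    y ∈ cylinder (![1] : Fin 1 → Fin 2) ↔ y 0 = 1 := by
  constructor
  · intro h
    have := h 0
    simpa using this
  · intro h i
    fin_cases i
    simpa using h

lemma mem_shift_preimage_oneCyl {x : FullShift} {j : ℕ} :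
    x ∈ shift^[j] ⁻¹' cylinder (![1] : Fin 1 → Fin 2) ↔ x (j : ℤ) = 1 := by
  rw [Set.mem_preimage, mem_oneCyl_iff, shift_iterate_apply, zero_add]

lemma sum_indicator_eq_ones (x : FullShift) (n : ℕ) :
    ∑ j ∈ Finset.range n,
      (shift^[j] ⁻¹' cylinder (![1] : Fin 1 → Fin 2)).indicator
        (fun _ => (1 : ENNReal)) x = (ones (wordAt x n) : ENNReal) := by
  classical
  rw [ones_eq_sum]
  have : ∀ j ∈ Finset.range n,
      (shift^[j] ⁻¹' cylinder (![1] : Fin 1 → Fin 2)).indicator (fun _ => (1 : ENNReal)) x =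
        (if x (j : ℤ) = 1 then 1 else 0) := by
    intro j _
    rw [Set.indicator_apply]
    by_cases h : x (j:ℤ) = 1
    · rw [if_pos (mem_shift_preimage_oneCyl.2 h), if_pos h]
    · rw [if_neg (fun hc => h (mem_shift_preimage_oneCyl.1 hc)), if_neg h]
  rw [Finset.sum_congr rfl this]
  push_cast
  rw [← Fin.sum_univ_eq_sum_range (fun j => if x (j : ℤ) = (1 : Fin 2) then (1:ENNReal) else 0) n]
  rfl

lemma freq_le_max {μ : Measure FullShift} [IsProbabilityMeasure μ] (hinvμ : μ.map shift = μ)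
    {Y : Set FullShift} (hYm : MeasurableSet Y) (hY : μ Y = 1)
    (K : ℕ → ℕ) (hword : ∀ x ∈ Y, ∀ n : ℕ, ones (wordAt x n) ≤ K n)
    {D : ℝ} (hK : Filter.Tendsto (fun n : ℕ => (K n : ℝ) / n) Filter.atTop (nhds D)) :
    (μ (cylinder (![1] : Fin 1 → Fin 2))).toReal ≤ D := by
  have mp : MeasurePreserving shift μ μ := ⟨measurable_shift, hinvμ⟩
  have key : ∀ n : ℕ, (n : ENNReal) * μ (cylinder (![1] : Fin 1 → Fin 2)) ≤ (K n : ENNReal) := by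
    intro n
    have hmeasE : ∀ j : ℕ, MeasurableSet (shift^[j] ⁻¹' cylinder (![1] : Fin 1 → Fin 2)) :=
      fun j => (measurable_shift.iterate j) (measurableSet_cylinder _)
    have h1 : ∀ j : ℕ, μ (shift^[j] ⁻¹' cylinder (![1] : Fin 1 → Fin 2)) =
        μ (cylinder (![1] : Fin 1 → Fin 2)) :=
      fun j => (mp.iterate j).measure_preimage (measurableSet_cylinder _).nullMeasurableSet
    calc (n : ENNReal) * μ (cylinder (![1] : Fin 1 → Fin 2))
        = ∑ j ∈ Finset.range n, μ (shift^[j] ⁻¹' cylinder (![1] : Fin 1 → Fin 2)) := by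
          rw [Finset.sum_congr rfl (fun j _ => h1 j), Finset.sum_const, Finset.card_range,
            nsmul_eq_mul]
      _ = ∑ j ∈ Finset.range n, ∫⁻ x, (shift^[j] ⁻¹' cylinder (![1] : Fin 1 → Fin 2)).indicator
            (fun _ => (1:ENNReal)) x ∂μ := by
          refine Finset.sum_congr rfl (fun j _ => ?_)
          rw [lintegral_indicator (hmeasE j)]
          simp
      _ = ∫⁻ x, ∑ j ∈ Finset.range n, (shift^[j] ⁻¹' cylinder (![1] : Fin 1 → Fin 2)).indicator
            (fun _ => (1:ENNReal)) x ∂μ := by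
          rw [lintegral_finset_sum]
          intro j _
          exact (measurable_const.indicator (hmeasE j))
      _ = ∫⁻ x, (ones (wordAt x n) : ENNReal) ∂μ := by
          refine lintegral_congr (fun x => ?_)
          exact sum_indicator_eq_ones x n
      _ ≤ ∫⁻ _, (K n : ENNReal) ∂μ := by
          apply lintegral_mono_ae
          have hae : ∀ᵐ x ∂μ, x ∈ Y := by
            rw [MeasureTheory.ae_iff]
            have : {x | ¬ x ∈ Y} = Yᶜ := rfl
            rw [this, measure_compl hYm (measure_ne_top μ Y), hY, measure_univ]
            simp
          filter_upwards [hae] with x hx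
          exact_mod_cast hword x hx n
      _ = (K n : ENNReal) := by rw [lintegral_const, measure_univ, mul_one]
  have key2 : ∀ n : ℕ, 1 ≤ n → (μ (cylinder (![1] : Fin 1 → Fin 2))).toReal ≤ (K n : ℝ) / n := by
    intro n hn
    have := key n
    have hn' : (0:ℝ) < n := by exact_mod_cast hn
    rw [le_div_iff₀ hn']
    have htr : ((n : ENNReal) * μ (cylinder (![1] : Fin 1 → Fin 2))).toReal ≤
        ((K n : ENNReal)).toReal := by
      apply ENNReal.toReal_mono (by simp) this
    rw [ENNReal.toReal_mul] at htr
    simpa [mul_comm] using htr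
  exact ge_of_tendsto hK (Filter.eventually_atTop.2 ⟨1, fun n hn => key2 n hn⟩)

end Freq
-- ============ birkhoff sums and integrals ============
section Birk

lemma mem_bcyl_iff {y : FullShift} {b : Fin 2} :
    y ∈ cylinder (![b] : Fin 1 → Fin 2) ↔ y 0 = b := by
  constructor
  · intro h
    have := h 0
    simpa using this
  · intro h i
    fin_cases i
    simpa using h

lemma birkhoff_ge {X : Set FullShift} (hinv : shift '' X = X) (φ : FullShift → ℝ) {r0 r1 : ℝ}
    (h0 : ∀ y ∈ hereditaryClosure X, y 0 = 0 → r0 ≤ φ y)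
    (h1 : ∀ y ∈ hereditaryClosure X, y 0 = 1 → r1 ≤ φ y)
    {x : FullShift} (hx : x ∈ hereditaryClosure X) (n : ℕ) :
    (ones (wordAt x n) : ℝ) * r1 + ((n : ℝ) - (ones (wordAt x n) : ℝ)) * r0 ≤
      birkhoff φ n x := by
  classical
  have step : ∀ i ∈ Finset.range n,
      (if x (i : ℤ) = 1 then r1 else r0) ≤ φ (shift^[i] x) := by
    intro i _
    have hmem : shift^[i] x ∈ hereditaryClosure X := shift_iterate_mem_hereditaryClosure hinv hx i
    have hval : (shift^[i] x) 0 = x (i : ℤ) := by rw [shift_iterate_apply, zero_add]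
    by_cases h : x (i : ℤ) = 1
    · rw [if_pos h]
      exact h1 _ hmem (by rw [hval, h])
    · rw [if_neg h]
      have : x (i:ℤ) = 0 := fin2_ne_one h
      exact h0 _ hmem (by rw [hval, this])
  have hsum := Finset.sum_le_sum step
  refine le_trans (le_of_eq ?_) hsum
  rw [← Fin.sum_univ_eq_sum_range (fun i => if x (i : ℤ) = (1 : Fin 2) then r1 else r0) n]
  have : ∀ i : Fin n, (if x ((i:ℕ) : ℤ) = (1 : Fin 2) then r1 else r0) =
      (if wordAt x n i = 1 then r1 else r0) := fun i => rfl
  rw [Finset.sum_congr rfl (fun i _ => this i)]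
  rw [← Finset.sum_filter_add_sum_filter_not Finset.univ (fun i => wordAt x n i = 1)]
  rw [Finset.sum_congr rfl (fun i hi => ?_), Finset.sum_const,
      Finset.sum_congr rfl (fun i hi => ?_), Finset.sum_const]
  · have hcard : (Finset.univ.filter (fun i : Fin n => wordAt x n i = 1)).card
        = ones (wordAt x n) := rfl
    have hcard2 : (Finset.univ.filter (fun i : Fin n => ¬ wordAt x n i = 1)).card
        = n - ones (wordAt x n) := by
      have := Finset.card_filter_add_card_filter_not
        (s := (Finset.univ : Finset (Fin n))) (fun i => wordAt x n i = 1)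
      simp only [Finset.card_univ, Fintype.card_fin] at this
      unfold ones
      omega
    rw [hcard, hcard2, nsmul_eq_mul, nsmul_eq_mul]
    have hle := ones_le (wordAt x n)
    have : ((n - ones (wordAt x n) : ℕ) : ℝ) = (n : ℝ) - (ones (wordAt x n) : ℝ) := by
      push_cast [Nat.cast_sub hle]
      ring
    rw [this]
  · simp only [Finset.mem_filter] at hi
    rw [if_neg hi.2]
  · simp only [Finset.mem_filter] at hi
    rw [if_pos hi.2]

lemma integral_phi_le {μ : Measure FullShift} [IsProbabilityMeasure μ]
    (hinvμ : μ.map shift = μ) {Y : Set FullShift} (hYm : MeasurableSet Y) (hY : μ Y = 1)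
    (hYcomp : IsCompact Y) {φ : FullShift → ℝ} (hφ : ContinuousOn φ Y)
    {s0 s1 : ℝ} (hub0 : ∀ y ∈ Y, y 0 = 0 → φ y ≤ s0) (hub1 : ∀ y ∈ Y, y 0 = 1 → φ y ≤ s1)
    (hs01 : s0 ≤ s1) (K : ℕ → ℕ) (hword : ∀ x ∈ Y, ∀ n : ℕ, ones (wordAt x n) ≤ K n)
    {D : ℝ} (hK : Filter.Tendsto (fun n : ℕ => (K n : ℝ) / n) Filter.atTop (nhds D)) :
    ∫ x, φ x ∂μ ≤ s0 + (s1 - s0) * D := by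
  have hae : ∀ᵐ x ∂μ, x ∈ Y := by
    rw [MeasureTheory.ae_iff]
    have : {x | ¬ x ∈ Y} = Yᶜ := rfl
    rw [this, measure_compl hYm (measure_ne_top μ Y), hY, measure_univ]
    simp
  have aesm : AEStronglyMeasurable φ μ := by
    have h1 : AEMeasurable φ (μ.restrict Y) := hφ.aemeasurable hYm
    rw [Measure.restrict_eq_self_of_ae_mem hae] at h1
    exact h1.aestronglyMeasurable
  obtain ⟨C, hC⟩ := hYcomp.exists_bound_of_continuousOn hφ
  have hint : Integrable φ μ := by
    apply Integrable.mono' (integrable_const C) aesm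
    filter_upwards [hae] with x hx
    exact hC x hx
  set g : FullShift → ℝ :=
    fun x => s0 + (s1 - s0) * (cylinder (![1] : Fin 1 → Fin 2)).indicator
      (fun _ => (1:ℝ)) x with hg
  have hgint : Integrable g μ := by
    apply Integrable.add (integrable_const s0)
    apply Integrable.const_mul
    rw [MeasureTheory.integrable_indicator_iff (measurableSet_cylinder _)]
    exact (integrable_const (1:ℝ)).integrableOn
  have hle : φ ≤ᵐ[μ] g := by
    filter_upwards [hae] with x hx
    rcases fin2_cases (x 0) with h | h
    · have hnot : x ∉ cylinder (![1] : Fin 1 → Fin 2) := by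
        rw [mem_oneCyl_iff]
        omega
      show φ x ≤ s0 + (s1 - s0) * (cylinder (![1] : Fin 1 → Fin 2)).indicator (fun _ => (1:ℝ)) x
      rw [Set.indicator_of_notMem hnot, mul_zero, add_zero]
      exact hub0 x hx h
    · have hmem : x ∈ cylinder (![1] : Fin 1 → Fin 2) := mem_oneCyl_iff.2 h
      show φ x ≤ s0 + (s1 - s0) * (cylinder (![1] : Fin 1 → Fin 2)).indicator (fun _ => (1:ℝ)) x
      rw [Set.indicator_of_mem hmem, mul_one]
      have := hub1 x hx h
      linarith
  have hgval : ∫ x, g x ∂μ =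
      s0 + (s1 - s0) * (μ (cylinder (![1] : Fin 1 → Fin 2))).toReal := by
    rw [hg]
    rw [integral_add (integrable_const s0) (by
      apply Integrable.const_mul
      rw [MeasureTheory.integrable_indicator_iff (measurableSet_cylinder _)]
      exact (integrable_const (1:ℝ)).integrableOn)]
    rw [integral_const, MeasureTheory.integral_const_mul]
    have : ∫ x, (cylinder (![1] : Fin 1 → Fin 2)).indicator (fun _ => (1:ℝ)) x ∂μ =
        (μ (cylinder (![1] : Fin 1 → Fin 2))).toReal := by
      have := MeasureTheory.integral_indicator_one
        (μ := μ) (measurableSet_cylinder (![1] : Fin 1 → Fin 2))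
      convert this using 2 <;> rfl
    rw [this]
    simp
  have hfreq : (μ (cylinder (![1] : Fin 1 → Fin 2))).toReal ≤ D :=
    freq_le_max hinvμ hYm hY K hword hK
  calc ∫ x, φ x ∂μ ≤ ∫ x, g x ∂μ := integral_mono_ae hint hgint hle
    _ = s0 + (s1 - s0) * (μ (cylinder (![1] : Fin 1 → Fin 2))).toReal := hgval
    _ ≤ s0 + (s1 - s0) * D := by
        have h1 : 0 ≤ s1 - s0 := by linarith
        nlinarith [hfreq]

end Birk
-- ============ producing an atom at a periodic point ============
section Atom

lemma measurableSet_futureSet (x : FullShift) :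
    MeasurableSet {y : FullShift | ∀ i : ℕ, y (i : ℤ) = x (i : ℤ)} := by
  have : {y : FullShift | ∀ i : ℕ, y (i : ℤ) = x (i : ℤ)} =
      ⋂ i : ℕ, (fun y : FullShift => y (i : ℤ)) ⁻¹' {x (i : ℤ)} := by
    ext y; simp
  rw [this]
  exact MeasurableSet.iInter fun i => (measurable_pi_apply _) (measurableSet_singleton _)

lemma exists_periodic_atom (m : Measure FullShift) [IsProbabilityMeasure m]
    (hinvm : m.map shift = m) {ε : ENNReal} (hε : 0 < ε)
    (hU : ∀ n : ℕ, ∃ W : Fin n → Fin 2, ε ≤ m (cylinder W)) :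
    ∃ p : ℕ, 1 ≤ p ∧ ∃ y : FullShift, shift^[p] y = y ∧ ε ≤ m {y} := by
  classical
  have mp : MeasurePreserving shift m m := ⟨measurable_shift, hinvm⟩
  -- Step 1: a point whose cylinders all have measure ≥ ε
  set C : ℕ → Set FullShift := fun n => {x | ε ≤ m (cylinder (wordAt x n))} with hC
  have hCclosed : ∀ n, IsClosed (C n) := by
    intro n
    have : C n = ⋃ W ∈ Finset.univ.filter
        (fun W : Fin n → Fin 2 => ε ≤ m (cylinder W)), cylinder W := by
      ext x
      simp only [hC, Set.mem_setOf_eq, Set.mem_iUnion, Finset.mem_filter, Finset.mem_univ,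
        true_and]
      constructor
      · intro h
        exact ⟨wordAt x n, h, mem_cylinder_wordAt x n⟩
      · rintro ⟨W, hW, hxW⟩
        rw [wordAt_eq_of_mem hxW]
        exact hW
    rw [this]
    apply Set.Finite.isClosed_biUnion (Finset.finite_toSet _)
    intro W _
    exact isClosed_cylinder W
  have hCne : ∀ n, (C n).Nonempty := by
    intro n
    obtain ⟨W, hW⟩ := hU n
    refine ⟨fun j : ℤ => if h : 0 ≤ j ∧ j < n then W ⟨j.toNat, by omega⟩ else 0, ?_⟩
    have hword : wordAt (fun j : ℤ => if h : 0 ≤ j ∧ j < n then W ⟨j.toNat, by omega⟩ else 0) n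
        = W := by
      funext i
      have hcond : (0 : ℤ) ≤ (i : ℕ) ∧ ((i : ℕ) : ℤ) < n := by
        constructor
        · positivity
        · exact_mod_cast i.2
      simp only [wordAt]
      rw [dif_pos hcond]
      exact congrArg W (by ext; simp)
    show ε ≤ m (cylinder (wordAt _ n))
    rw [hword]
    exact hW
  have hCanti : Antitone C := by
    apply antitone_nat_of_succ_le
    intro n x hx
    exact le_trans hx (measure_mono (cylinder_wordAt_succ_subset x n))
  have hCne2 : (⋂ n, C n).Nonempty := by
    apply IsCompact.nonempty_iInter_of_directed_nonempty_isCompact_isClosed C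
      (hCanti.directed_ge) hCne
      (fun n => (hCclosed n).isCompact) hCclosed
  obtain ⟨x, hx⟩ := hCne2
  simp only [Set.mem_iInter] at hx
  -- Step 2: the future set A
  set A : Set FullShift := {y | ∀ i : ℕ, y (i : ℤ) = x (i : ℤ)} with hA
  have hAeq : A = ⋂ n, cylinder (wordAt x n) := (iInter_cylinder_wordAt x).symm
  have hAmeas : MeasurableSet A := measurableSet_futureSet x
  have hAm : ε ≤ m A := by
    rw [hAeq]
    have htd := MeasureTheory.tendsto_measure_iInter_atTop
      (μ := m) (s := fun n => cylinder (wordAt x n))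
      (fun n => (measurableSet_cylinder _).nullMeasurableSet)
      (cylinder_wordAt_antitone x) ⟨0, measure_ne_top m _⟩
    exact ge_of_tendsto htd (Filter.Eventually.of_forall (fun n => hx n))
  -- Step 3: Poincaré recurrence
  have hrec : ∃ p : ℕ, 1 ≤ p ∧ (A ∩ shift^[p] ⁻¹' A).Nonempty := by
    obtain ⟨N, hN⟩ := ENNReal.exists_inv_nat_lt (ne_of_gt hε)
    have hNne : N ≠ 0 := by
      intro h
      rw [h] at hN
      simp at hN
    by_contra hcon
    have hcon' : ∀ p : ℕ, 1 ≤ p → A ∩ shift^[p] ⁻¹' A = ∅ := by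
      intro p hp
      rw [← Set.not_nonempty_iff_eq_empty]
      intro hne
      exact hcon ⟨p, hp, hne⟩
    have hdisj : (↑(Finset.range N) : Set ℕ).Pairwise
        (Function.onFun (MeasureTheory.AEDisjoint m) (fun j => shift^[j] ⁻¹' A)) := by
      intro j hj l hl hjl
      have key : ∀ a b : ℕ, a < b → m ((shift^[a] ⁻¹' A) ∩ (shift^[b] ⁻¹' A)) = 0 := by
        intro a b hab
        have heq : (shift^[a] ⁻¹' A) ∩ (shift^[b] ⁻¹' A) =
            shift^[a] ⁻¹' (A ∩ shift^[b - a] ⁻¹' A) := by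
          ext z
          simp only [Set.mem_inter_iff, Set.mem_preimage]
          have : shift^[b] z = shift^[b - a] (shift^[a] z) := by
            rw [← Function.iterate_add_apply]
            congr 1
            omega
          rw [this]
        rw [heq]
        rw [(mp.iterate a).measure_preimage
          ((hAmeas.inter ((measurable_shift.iterate (b-a)) hAmeas)).nullMeasurableSet)]
        rw [hcon' (b - a) (by omega), measure_empty]
      rcases lt_or_gt_of_ne hjl with h | h
      · exact key j l h
      · show m ((shift^[j] ⁻¹' A) ∩ (shift^[l] ⁻¹' A)) = 0
        rw [Set.inter_comm]
        exact key l j h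
    have hsum : m (⋃ j ∈ Finset.range N, shift^[j] ⁻¹' A) =
        ∑ j ∈ Finset.range N, m (shift^[j] ⁻¹' A) :=
      measure_biUnion_finset₀ hdisj
        (fun j _ => ((measurable_shift.iterate j) hAmeas).nullMeasurableSet)
    have hval : ∀ j : ℕ, m (shift^[j] ⁻¹' A) = m A :=
      fun j => (mp.iterate j).measure_preimage hAmeas.nullMeasurableSet
    have h1 : (1 : ENNReal) < N * ε := by
      calc (1 : ENNReal) = N * (N : ENNReal)⁻¹ := by
            rw [ENNReal.mul_inv_cancel (by exact_mod_cast hNne) (by simp)]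
        _ < N * ε := by
            rw [ENNReal.mul_lt_mul_iff_right (by exact_mod_cast hNne) (by simp)]
            exact hN
    have h2 : (N : ENNReal) * ε ≤ 1 := by
      calc (N : ENNReal) * ε ≤ ∑ _j ∈ Finset.range N, m A := by
            rw [Finset.sum_const, Finset.card_range, nsmul_eq_mul]
            exact mul_le_mul_right hAm _
        _ = m (⋃ j ∈ Finset.range N, shift^[j] ⁻¹' A) := by
            rw [hsum]
            exact (Finset.sum_congr rfl (fun j _ => hval j)).symm
        _ ≤ m Set.univ := measure_mono (Set.subset_univ _)
        _ = 1 := measure_univ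
    exact absurd (lt_of_lt_of_le h1 h2) (lt_irrefl _)
  obtain ⟨p, hp1, w, hwA, hwpA⟩ := hrec
  -- Step 4: periodicity of x on the future
  have hperN : ∀ i : ℕ, x ((i : ℤ) + p) = x (i : ℤ) := by
    intro i
    have h1 : w ((i + p : ℕ) : ℤ) = x ((i + p : ℕ) : ℤ) := hwA (i + p)
    have h2 : (shift^[p] w) ((i : ℕ) : ℤ) = x ((i : ℕ) : ℤ) := hwpA i
    rw [shift_iterate_apply] at h2
    have : ((i + p : ℕ) : ℤ) = (i : ℤ) + p := by push_cast; ring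
    rw [this] at h1
    rw [← h1, h2]
  have hiter : ∀ (k : ℕ) (a : ℤ), 0 ≤ a → x (a + k * p) = x a := by
    intro k
    induction k with
    | zero => intro a _; simp
    | succ k ih =>
      intro a ha
      have h1 : a + (k + 1 : ℕ) * p = (a + k * p) + p := by push_cast; ring
      rw [h1]
      have h2 : 0 ≤ a + k * p := by positivity
      have h3 : x ((a + k * p) + p) = x (a + k * p) := by
        have := hperN (a + k * p).toNat
        rwa [Int.toNat_of_nonneg h2] at this
      rw [h3, ih a ha]
  have hsame : ∀ (j : ℤ) (t1 t2 : ℕ), 0 ≤ j + p * t1 → 0 ≤ j + p * t2 →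
      x (j + p * t1) = x (j + p * t2) := by
    have key : ∀ (j : ℤ) (t1 t2 : ℕ), t1 ≤ t2 → 0 ≤ j + p * t1 →
        x (j + p * t1) = x (j + p * t2) := by
      intro j t1 t2 ht h1
      have : j + p * t2 = (j + p * t1) + ((t2 - t1 : ℕ) : ℤ) * p := by
        push_cast [Nat.cast_sub ht]
        ring
      rw [this, hiter (t2 - t1) _ h1]
    intro j t1 t2 h1 h2
    rcases le_total t1 t2 with h | h
    · exact key j t1 t2 h h1
    · exact (key j t2 t1 h h2).symm
  -- Step 5: the periodic point y*
  set y : FullShift := fun j => x (j + (p : ℤ) * j.natAbs) with hy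
  have hynn : ∀ j : ℤ, 0 ≤ j + (p:ℤ) * j.natAbs := by
    intro j
    have hp' : (1:ℤ) ≤ p := by exact_mod_cast hp1
    have h0 : (0:ℤ) ≤ (j.natAbs : ℤ) := by positivity
    have h1 : (j.natAbs : ℤ) ≤ (p:ℤ) * j.natAbs := by nlinarith
    have h2 : -(j.natAbs : ℤ) ≤ j := by
      rcases Int.natAbs_eq j with h | h <;> omega
    omega
  -- the decreasing sets
  set Ck : ℕ → Set FullShift := fun k => shiftInv^[k * p] ⁻¹' A with hCk
  have minv : MeasurePreserving shiftInv m m := by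
    constructor
    · exact measurable_shiftInv
    · conv_lhs => rw [← hinvm]
      rw [Measure.map_map measurable_shiftInv measurable_shift]
      have : shiftInv ∘ shift = id := by
        funext z
        exact shiftInv_shift z
      rw [this, Measure.map_id]
  have hCkmem : ∀ (k : ℕ) (z : FullShift), z ∈ Ck k ↔
      ∀ i : ℕ, z ((i : ℤ) - (k * p : ℕ)) = x (i : ℤ) := by
    intro k z
    constructor
    · intro h i
      have := h i
      rwa [shiftInv_iterate_apply] at this
    · intro h i
      show (shiftInv^[k*p] z) ((i:ℕ):ℤ) = x ((i:ℕ):ℤ)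
      rw [shiftInv_iterate_apply]
      exact h i
  have hCkmeas : ∀ k, MeasurableSet (Ck k) :=
    fun k => (measurable_shiftInv.iterate (k*p)) hAmeas
  have hCkval : ∀ k, m (Ck k) = m A :=
    fun k => (minv.iterate (k*p)).measure_preimage hAmeas.nullMeasurableSet
  have hCkanti : Antitone Ck := by
    apply antitone_nat_of_succ_le
    intro k z hz
    rw [hCkmem] at hz ⊢
    intro i
    have h1 := hz (i + p)
    have harg : ((i + p : ℕ) : ℤ) - ((k+1) * p : ℕ) = (i : ℤ) - (k * p : ℕ) := by
      push_cast; ring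
    rw [harg] at h1
    rw [h1]
    have : ((i + p : ℕ) : ℤ) = (i:ℤ) + p := by push_cast; ring
    rw [this, hperN i]
  have hsingle : (⋂ k, Ck k) = {y} := by
    ext z
    simp only [Set.mem_iInter, Set.mem_singleton_iff]
    constructor
    · intro h
      funext j
      have hk := (hCkmem j.natAbs z).1 (h j.natAbs)
      have hnn : (0:ℤ) ≤ j + (p:ℤ) * j.natAbs := hynn j
      have hi : ∃ i : ℕ, (i : ℤ) = j + (p:ℤ) * j.natAbs := ⟨(j + (p:ℤ) * j.natAbs).toNat,
        Int.toNat_of_nonneg hnn⟩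
      obtain ⟨i, hieq⟩ := hi
      have := hk i
      have harg : (i : ℤ) - (j.natAbs * p : ℕ) = j := by
        have h' : ((j.natAbs * p : ℕ) : ℤ) = (p:ℤ) * j.natAbs := by push_cast; ring
        rw [h', hieq]
        ring
      rw [harg] at this
      rw [this, hy]
      show x (i:ℤ) = x (j + (p:ℤ) * j.natAbs)
      rw [hieq]
    · intro h
      subst h
      intro k
      rw [hCkmem]
      intro i
      show x (((i:ℤ) - (k*p:ℕ)) + (p:ℤ) * ((i:ℤ) - (k*p:ℕ)).natAbs) = x (i:ℤ)
      set j : ℤ := (i:ℤ) - (k*p:ℕ) with hj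
      have h1 : x (j + (p:ℤ) * j.natAbs) = x (j + (p:ℤ) * k) := by
        apply hsame j j.natAbs k (hynn j)
        have : j + (p:ℤ) * k = i := by rw [hj]; push_cast; ring
        rw [this]; positivity
      rw [h1]
      have : j + (p:ℤ) * k = i := by rw [hj]; push_cast; ring
      rw [this]
  have hmy : ε ≤ m {y} := by
    rw [← hsingle]
    have htd := MeasureTheory.tendsto_measure_iInter_atTop (μ := m)
      (fun k => (hCkmeas k).nullMeasurableSet) hCkanti ⟨0, measure_ne_top m _⟩
    have hconst : Filter.Tendsto (fun k => m (Ck k)) Filter.atTop (nhds (m A)) := by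
      have : (fun k => m (Ck k)) = fun _ => m A := funext hCkval
      rw [this]
      exact tendsto_const_nhds
    have : m (⋂ k, Ck k) = m A := tendsto_nhds_unique htd hconst
    rw [this]
    exact hAm
  have hyper : shift^[p] y = y := by
    funext j
    rw [shift_iterate_apply]
    show x ((j + (p:ℤ)) + (p:ℤ) * (j + (p:ℤ)).natAbs) = x (j + (p:ℤ) * j.natAbs)
    have h1 : (j + (p:ℤ)) + (p:ℤ) * (j + (p:ℤ)).natAbs = j + (p:ℤ) * ((1 + (j + (p:ℤ)).natAbs : ℕ)) := by
      push_cast; ring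
    rw [h1]
    apply hsame
    · rw [← h1]
      have := hynn (j + (p:ℤ))
      omega
    · exact hynn j
  exact ⟨p, hp1, y, hyper, hmy⟩

end Atom
-- ============ small helpers for the main proof ============
section Helpers

lemma measurePreserving_shiftInv {m : Measure FullShift} (hinvm : m.map shift = m) :
    MeasurePreserving shiftInv m m := by
  constructor
  · exact measurable_shiftInv
  · conv_lhs => rw [← hinvm]
    rw [Measure.map_map measurable_shiftInv measurable_shift]
    have : shiftInv ∘ shift = id := by
      funext z
      exact shiftInv_shift z
    rw [this, Measure.map_id]

lemma gibbs_lower_mul {c e t : ℝ} (h : c⁻¹ ≤ t / (2:ℝ) ^ e) : c⁻¹ * (2:ℝ) ^ e ≤ t := by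
  have h2 : (0:ℝ) < (2:ℝ) ^ e := Real.rpow_pos_of_pos two_pos e
  calc c⁻¹ * (2:ℝ) ^ e ≤ (t / (2:ℝ) ^ e) * (2:ℝ) ^ e := by nlinarith
    _ = t := div_mul_cancel₀ t (ne_of_gt h2)

lemma pow_eq_two_rpow {a : ℝ} (ha : 0 < a) (k : ℕ) :
    a ^ k = (2:ℝ) ^ ((k : ℝ) * Real.logb 2 a) := by
  rw [mul_comm, Real.rpow_mul (by norm_num : (0:ℝ) ≤ 2), Real.rpow_logb two_pos (by norm_num) ha,
    Real.rpow_natCast]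

lemma one_le_two_rpow {e : ℝ} (he : 0 ≤ e) : (1:ℝ) ≤ (2:ℝ) ^ e := by
  calc (1:ℝ) = (2:ℝ) ^ (0:ℝ) := (Real.rpow_zero 2).symm
    _ ≤ (2:ℝ) ^ e := by
        rw [Real.rpow_le_rpow_left_iff (by norm_num : (1:ℝ) < 2)]
        exact he

lemma ones_zero_word (n : ℕ) : ones (fun _ : Fin n => (0 : Fin 2)) = 0 := by
  unfold ones
  simp

lemma wordAt_zero (n : ℕ) : wordAt (fun _ => (0 : Fin 2) : FullShift) n =
    (fun _ : Fin n => (0 : Fin 2)) := rfl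

lemma ones_one_word : ones (![1] : Fin 1 → Fin 2) = 1 := by decide

lemma zeros_one_word : zeros (![1] : Fin 1 → Fin 2) = 0 := by decide

end Helpers

section Count

lemma ones_ge_of_periodic_one {y : FullShift} {p : ℕ} (hp : 1 ≤ p) {i0 : ℤ} (hi0 : y i0 = 1)
    (hrep : ∀ k : ℕ, ∀ j : ℤ, y (j + (k * p : ℕ)) = y j) (m : ℕ) :
    ∃ n : ℕ, m ≤ ones (wordAt y n) := by
  classical
  set N : ℕ → ℕ := fun t => (i0 + ((i0.natAbs + t) * p : ℕ)).toNat with hN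
  have habs : -(i0.natAbs : ℤ) ≤ i0 := by
    rcases Int.natAbs_eq i0 with h | h <;> omega
  have hnat : ∀ t : ℕ, i0.natAbs ≤ (i0.natAbs + t) * p := by
    intro t
    calc i0.natAbs ≤ i0.natAbs + t := Nat.le_add_right _ _
      _ = (i0.natAbs + t) * 1 := (Nat.mul_one _).symm
      _ ≤ (i0.natAbs + t) * p := Nat.mul_le_mul_left _ hp
  have hnonneg : ∀ t : ℕ, (0:ℤ) ≤ i0 + ((i0.natAbs + t) * p : ℕ) := by
    intro t
    have h1 : ((i0.natAbs : ℕ) : ℤ) ≤ (((i0.natAbs + t) * p : ℕ) : ℤ) := by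
      exact_mod_cast hnat t
    omega
  have hcast : ∀ t : ℕ, (N t : ℤ) = i0 + ((i0.natAbs + t) * p : ℕ) := by
    intro t
    rw [hN]
    exact Int.toNat_of_nonneg (hnonneg t)
  have hone : ∀ t : ℕ, y ((N t : ℕ) : ℤ) = 1 := by
    intro t
    rw [hcast t, hrep]
    exact hi0
  have hmono : StrictMono N := by
    intro a b hab
    have h1 : (N a : ℤ) < (N b : ℤ) := by
      rw [hcast a, hcast b]
      have h2 : (i0.natAbs + a) * p < (i0.natAbs + b) * p :=
        Nat.mul_lt_mul_of_lt_of_le (by omega) le_rfl (by omega)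
      have h3 : (((i0.natAbs + a) * p : ℕ) : ℤ) < (((i0.natAbs + b) * p : ℕ) : ℤ) := by
        exact_mod_cast h2
      omega
    exact_mod_cast h1
  refine ⟨N m + 1, ?_⟩
  have hlt : ∀ t, t < m → N t < N m + 1 := by
    intro t ht
    exact Nat.lt_succ_of_le (le_of_lt (hmono ht))
  set f : ℕ → Fin (N m + 1) := fun t => ⟨N t % (N m + 1), Nat.mod_lt _ (by omega)⟩ with hfdef
  have hfval : ∀ t, t < m → (f t : ℕ) = N t := by
    intro t ht
    show N t % (N m + 1) = N t
    exact Nat.mod_eq_of_lt (hlt t ht)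
  have hcard := Finset.card_le_card_of_injOn f
    (s := Finset.range m)
    (t := Finset.univ.filter (fun i : Fin (N m + 1) => wordAt y (N m + 1) i = 1))
    ?hmaps ?hinj
  · rw [Finset.card_range] at hcard
    exact hcard
  case hmaps =>
    intro t ht
    have ht' : t < m := Finset.mem_range.1 ht
    simp only [Finset.mem_coe, Finset.mem_filter, Finset.mem_univ, true_and]
    show y (((f t : ℕ) : ℕ) : ℤ) = 1
    rw [hfval t ht']
    exact hone t
  case hinj =>
    intro a ha b hb hab
    have ha' : a < m := Finset.mem_range.1 ha
    have hb' : b < m := Finset.mem_range.1 hb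
    have h1 : N a = N b := by
      have h2 := congrArg Fin.val hab
      rwa [hfval a ha', hfval b hb'] at h2
    exact hmono.injective h1

end Count

set_option maxHeartbeats 1000000 in
open Classical in
theorem stmt16 (X : Set FullShift) (hcl : IsClosed X) (hne : X.Nonempty)
    (hinv : shift '' X = X)
    (ν B : Measure FullShift) [IsProbabilityMeasure ν] [IsProbabilityMeasure B]
    (hνerg : Ergodic shift ν) (hνX : ν X = 1)
    (hatomless : ∀ x : FullShift, ν {x} = 0)
    (q : ℝ) (hq0 : 0 < q) (hq1 : q < 1)
    (hB : ∀ (n : ℕ) (W : Fin n → Fin 2),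
      (B (cylinder W)).toReal = q ^ zeros W * (1 - q) ^ ones W)
    (κ : Measure FullShift) (hκ : κ = (ν.prod B).map Qmul)
    (hκerg : Ergodic shift κ) (hκX : κ (hereditaryClosure X) = 1)
    (φ : FullShift → ℝ) (hφ : ContinuousOn φ (hereditaryClosure X))
    (d D Dν Dφ Dφκ dφ V0 V1 P : ℝ)
    -- d = sup_{μ ∈ M(X,S)} μ([1])
    (hd : IsLUB {r : ℝ | ∃ μ : Measure FullShift, IsProbabilityMeasure μ ∧
      μ.map shift = μ ∧ μ X = 1 ∧
      r = (μ (cylinder (![1] : Fin 1 → Fin 2))).toReal} d)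
    -- D = lim (1/n) max_{W ∈ L_n(X)} #₁W
    (hD : Tendsto (fun n : ℕ =>
        sSup {m : ℝ | ∃ Wd : Fin n → Fin 2, (X ∩ cylinder Wd).Nonempty ∧ m = ones Wd} / n)
      atTop (nhds D))
    -- D_ν = lim (1/n) max_{W ∈ L_n(X), ν(W) > 0} #₁W
    (hDν : Tendsto (fun n : ℕ =>
        sSup {m : ℝ | ∃ Wd : Fin n → Fin 2, 0 < ν (cylinder Wd) ∧ m = ones Wd} / n)
      atTop (nhds Dν))
    (hDνD : Dν = D)
    -- D^φ = lim (1/n) sup_{x ∈ X̃} Σ_{i<n} φ(Sⁱx)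
    (hDφ : Tendsto (fun n : ℕ => sSup ((birkhoff φ n) '' hereditaryClosure X) / n)
      atTop (nhds Dφ))
    -- D^φ_κ = lim (1/n) max_{W, κ(W)>0} sup_{x ∈ W} Σ_{i<n} φ(Sⁱx)
    (hDφκ : Tendsto (fun n : ℕ =>
        sSup ((birkhoff φ n) ''
          {x ∈ hereditaryClosure X | 0 < κ (cylinder (wordAt x n))}) / n)
      atTop (nhds Dφκ))
    (hDφκDφ : Dφκ = Dφ)
    -- d^φ = sup over ergodic invariant measures of ∫ φ dμ
    (hdφ : IsLUB {r : ℝ | ∃ μ : Measure FullShift, IsProbabilityMeasure μ ∧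
      Ergodic shift μ ∧ μ (hereditaryClosure X) = 1 ∧ r = ∫ x, φ x ∂μ} dφ)
    (hV0 : V0 = sSup (φ '' (hereditaryClosure X ∩ cylinder (![0] : Fin 1 → Fin 2))) -
      sInf (φ '' (hereditaryClosure X ∩ cylinder (![0] : Fin 1 → Fin 2))))
    (hV1 : V1 = sSup (φ '' (hereditaryClosure X ∩ cylinder (![1] : Fin 1 → Fin 2))) -
      sInf (φ '' (hereditaryClosure X ∩ cylinder (![1] : Fin 1 → Fin 2))))
    -- P = topological pressure of φ on X̃
    (hP : Tendsto (fun n : ℕ => Real.logb 2 (Zn (hereditaryClosure X) φ n) / n)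
      atTop (nhds P))
    (hyp1 : P ≤ (V0 - Real.logb 2 (1 - q) - V1) * d + dφ - V0)
    (hyp2 : sSup (φ '' (hereditaryClosure X ∩ cylinder (![0] : Fin 1 → Fin 2))) ≤
      sSup (φ '' (hereditaryClosure X ∩ cylinder (![1] : Fin 1 → Fin 2))))
    (hyp3 : V1 ≤ V0 - Real.logb 2 (1 - q)) :
    ¬ IsGibbs (hereditaryClosure X) κ φ P := by 
  classical
  rintro ⟨c, hcpos, hG⟩
  -- notation
  set s0 : ℝ := sSup (φ '' (hereditaryClosure X ∩ cylinder (![0] : Fin 1 → Fin 2))) with hs0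
  set s1 : ℝ := sSup (φ '' (hereditaryClosure X ∩ cylinder (![1] : Fin 1 → Fin 2))) with hs1
  set L : ℝ := Real.logb 2 (1 - q) with hL
  have h1q : 0 < 1 - q := by linarith
  have hq1' : 1 - q < 1 := by linarith
  have hXm : MeasurableSet X := hcl.measurableSet
  have hhcC : IsCompact (hereditaryClosure X) := isCompact_hereditaryClosure hcl
  have hhcM : MeasurableSet (hereditaryClosure X) := hhcC.isClosed.measurableSet
  haveI : IsProbabilityMeasure κ := kappa_prob hκ
  -- maximal ones counts
  set KX : ℕ → ℕ := maxOnes (fun {k} (W : Fin k → Fin 2) => (X ∩ cylinder W).Nonempty) with hKX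
  set Kν : ℕ → ℕ := maxOnes (fun {k} (W : Fin k → Fin 2) => 0 < ν (cylinder W)) with hKνdef
  have hexX : ∀ n : ℕ, ∃ W : Fin n → Fin 2, (X ∩ cylinder W).Nonempty := by
    intro n
    obtain ⟨x0, hx0⟩ := hne
    exact ⟨wordAt x0 n, ⟨x0, hx0, mem_cylinder_wordAt x0 n⟩⟩
  have hKXtend : Tendsto (fun n : ℕ => ((KX n : ℕ) : ℝ) / n) atTop (nhds D) := by
    have heq : (fun n : ℕ =>
        sSup {m : ℝ | ∃ Wd : Fin n → Fin 2, (X ∩ cylinder Wd).Nonempty ∧ m = ones Wd} / n) =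
        fun n : ℕ => ((KX n : ℕ) : ℝ) / n := by
      funext n
      rw [sSup_maxOnes (Pr := fun {k} (W : Fin k → Fin 2) => (X ∩ cylinder W).Nonempty) (hexX n)]
    rwa [heq] at hD
  have hKνge : ∀ n : ℕ, (n : ℝ) * D ≤ ((Kν n : ℕ) : ℝ) :=
    maxOnes_nu_ge hνerg.toMeasurePreserving hDν hDνD
  have hD0 : 0 ≤ D := by
    apply ge_of_tendsto hKXtend
    filter_upwards with n
    positivity
  -- word-count bounds
  have hwordX : ∀ x ∈ X, ∀ n : ℕ, ones (wordAt x n) ≤ KX n := by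
    intro x hx n
    exact le_maxOnes ⟨x, hx, mem_cylinder_wordAt x n⟩
  have hwordHc : ∀ x ∈ hereditaryClosure X, ∀ n : ℕ, ones (wordAt x n) ≤ KX n := by
    rintro x ⟨x', hx', hle⟩ n
    exact le_trans (ones_wordAt_le_of_le hle n) (hwordX x' hx' n)
  -- d ≤ D
  have hdD : d ≤ D := by
    apply hd.2
    rintro r ⟨μ, hμp, hμi, hμX, rfl⟩
    exact freq_le_max hμi hXm hμX KX hwordX hKXtend
  -- bounds on φ
  have hbddA : ∀ b : Fin 2, BddAbove (φ '' (hereditaryClosure X ∩ cylinder (![b]))) := by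
    intro b
    exact ((hhcC.inter_right (isClosed_cylinder _)).image_of_continuousOn
      (hφ.mono Set.inter_subset_left)).bddAbove
  have hbddB : ∀ b : Fin 2, BddBelow (φ '' (hereditaryClosure X ∩ cylinder (![b]))) := by
    intro b
    exact ((hhcC.inter_right (isClosed_cylinder _)).image_of_continuousOn
      (hφ.mono Set.inter_subset_left)).bddBelow
  have hub0 : ∀ y ∈ hereditaryClosure X, y 0 = 0 → φ y ≤ s0 := by
    intro y hy h
    exact le_csSup (hbddA 0) ⟨y, ⟨hy, mem_bcyl_iff.2 h⟩, rfl⟩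
  have hub1 : ∀ y ∈ hereditaryClosure X, y 0 = 1 → φ y ≤ s1 := by
    intro y hy h
    exact le_csSup (hbddA 1) ⟨y, ⟨hy, mem_bcyl_iff.2 h⟩, rfl⟩
  have hlb0 : ∀ y ∈ hereditaryClosure X, y 0 = 0 → s0 - V0 ≤ φ y := by
    intro y hy h
    have := csInf_le (hbddB 0) (⟨y, ⟨hy, mem_bcyl_iff.2 h⟩, rfl⟩ :
      φ y ∈ φ '' (hereditaryClosure X ∩ cylinder (![0])))
    rw [hV0] at *
    linarith
  have hlb1 : ∀ y ∈ hereditaryClosure X, y 0 = 1 → s1 - V1 ≤ φ y := by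
    intro y hy h
    have := csInf_le (hbddB 1) (⟨y, ⟨hy, mem_bcyl_iff.2 h⟩, rfl⟩ :
      φ y ∈ φ '' (hereditaryClosure X ∩ cylinder (![1])))
    rw [hV1] at *
    linarith
  -- dφ bound
  have hdφ2 : dφ ≤ s0 + (s1 - s0) * D := by
    apply hdφ.2
    rintro r ⟨μ, hμp, hμe, hμhc, rfl⟩
    exact integral_phi_le hμe.toMeasurePreserving.map_eq hhcM hμhc hhcC hφ hub0 hub1 hyp2
      KX hwordHc hKXtend
  -- the key quantity
  set Δ : ℝ := (s1 - V1) - (s0 - V0) + (-L) with hΔdef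
  -- P bound
  have hPmax : P ≤ (s0 - V0) + D * Δ := by
    have h3 : 0 ≤ V0 - L - V1 := by linarith [hyp3]
    have hstep1 : (V0 - L - V1) * d ≤ (V0 - L - V1) * D :=
      mul_le_mul_of_nonneg_left hdD h3
    calc P ≤ (V0 - L - V1) * d + dφ - V0 := hyp1
      _ ≤ (V0 - L - V1) * D + (s0 + (s1 - s0) * D) - V0 := by linarith
      _ = (s0 - V0) + D * Δ := by rw [hΔdef]; ring
  rcases le_or_gt 0 Δ with hΔ | hΔ
  · -- Case Δ ≥ 0 : maximal ν-positive words have ν-measure bounded below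
    have key : ∀ n : ℕ, ∃ W : Fin n → Fin 2, ENNReal.ofReal c⁻¹ ≤ ν (cylinder W) := by
      intro n
      obtain ⟨W, hWpos, hWones⟩ := exists_maxOnes
        (Pr := fun {k} (W : Fin k → Fin 2) => 0 < ν (cylinder W)) (exists_pos_word ν n)
      refine ⟨W, ?_⟩
      have hν' : ν (X ∩ cylinder W) ≠ 0 := by
        intro h0
        have hh : ν (cylinder W) ≤ ν (X ∩ cylinder W) + ν Xᶜ := by
          calc ν (cylinder W) ≤ ν ((X ∩ cylinder W) ∪ Xᶜ) := measure_mono (by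
                intro z hz
                by_cases hzX : z ∈ X
                · exact Or.inl ⟨hzX, hz⟩
                · exact Or.inr hzX)
            _ ≤ _ := measure_union_le _ _
        have hXc : ν Xᶜ = 0 := by
          rw [measure_compl hXm (measure_ne_top ν X), hνX, measure_univ]
          simp
        rw [h0, hXc, add_zero] at hh
        exact absurd (le_antisymm hh zero_le) (ne_of_gt hWpos)
      obtain ⟨xn, hxnX, hxncyl⟩ := MeasureTheory.nonempty_of_measure_ne_zero hν'
      have hxnhc : xn ∈ hereditaryClosure X := subset_hereditaryClosure hxnX
      have hword : wordAt xn n = W := wordAt_eq_of_mem hxncyl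
      have hκpos : 0 < κ (cylinder (wordAt xn n)) := by
        rw [hword]
        exact kappa_cyl_pos hB hκ W hq1 hWpos
      have hlow : c⁻¹ * (2:ℝ) ^ (birkhoff φ n xn - (n:ℝ) * P) ≤
          (κ (cylinder W)).toReal := by
        have := gibbs_lower_mul (hG n xn hxnhc hκpos).1
        rwa [hword] at this
      have hmax : ∀ U : Fin n → Fin 2, ones W < ones U → ν (cylinder U) = 0 := by
        intro U hU
        by_contra h0
        have hposU : 0 < ν (cylinder U) := lt_of_le_of_ne zero_le (Ne.symm h0)
        have hleU : ones U ≤ maxOnes (fun {k} (W : Fin k → Fin 2) => 0 < ν (cylinder W)) n :=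
          le_maxOnes hposU
        rw [← hWones] at hleU
        omega
      have hup : (κ (cylinder W)).toReal ≤ (ν (cylinder W)).toReal * (1 - q) ^ ones W := by
        have h := kappa_cyl_le_nu hB hκ W hq0 hq1 hmax
        have h2 := ENNReal.toReal_mono (by
          exact ENNReal.mul_ne_top (measure_ne_top ν _) ENNReal.ofReal_ne_top) h
        rwa [ENNReal.toReal_mul, ENNReal.toReal_ofReal (by positivity)] at h2
      -- birkhoff lower bound
      have hS : ((ones W : ℕ) : ℝ) * (s1 - V1) + ((n:ℝ) - ((ones W : ℕ):ℝ)) * (s0 - V0) ≤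
          birkhoff φ n xn := by
        have := birkhoff_ge hinv φ hlb0 hlb1 hxnhc n
        rwa [hword] at this
      have hkD : (n : ℝ) * D ≤ ((ones W : ℕ) : ℝ) := by
        rw [hWones]
        exact hKνge n
      have hexp : 0 ≤ birkhoff φ n xn - (n:ℝ) * P - ((ones W : ℕ):ℝ) * L := by
        have h1 : ((n:ℝ) * D) * Δ ≤ ((ones W : ℕ):ℝ) * Δ := mul_le_mul_of_nonneg_right hkD hΔ
        have hn0 : (0:ℝ) ≤ (n:ℝ) := by positivity
        have h2 : (n:ℝ) * P ≤ (n:ℝ) * ((s0 - V0) + D * Δ) :=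
          mul_le_mul_of_nonneg_left hPmax hn0
        have hΔexp : Δ = (s1 - V1) - (s0 - V0) + (-L) := hΔdef
        nlinarith [hS, h1, h2]
      have hfinal : c⁻¹ ≤ (ν (cylinder W)).toReal := by
        have hpowL : (1 - q) ^ (ones W) = (2:ℝ) ^ (((ones W : ℕ):ℝ) * L) :=
          pow_eq_two_rpow h1q (ones W)
        have h2pos : (0:ℝ) < (2:ℝ) ^ (((ones W : ℕ):ℝ) * L) := Real.rpow_pos_of_pos two_pos _
        have hc0 : (0:ℝ) ≤ c⁻¹ := by positivity
        calc c⁻¹ = c⁻¹ * 1 := (mul_one _).symm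
          _ ≤ c⁻¹ * (2:ℝ) ^ (birkhoff φ n xn - (n:ℝ) * P - ((ones W : ℕ):ℝ) * L) :=
              mul_le_mul_of_nonneg_left (one_le_two_rpow hexp) hc0
          _ = (c⁻¹ * (2:ℝ) ^ (birkhoff φ n xn - (n:ℝ) * P)) / (2:ℝ) ^ (((ones W : ℕ):ℝ) * L) := by
              rw [Real.rpow_sub two_pos, mul_div_assoc]
          _ ≤ (κ (cylinder W)).toReal / (2:ℝ) ^ (((ones W : ℕ):ℝ) * L) := by
              apply div_le_div_of_nonneg_right hlow h2pos.le
          _ ≤ ((ν (cylinder W)).toReal * (1 - q) ^ (ones W)) / (2:ℝ) ^ (((ones W : ℕ):ℝ) * L) := by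
              apply div_le_div_of_nonneg_right hup h2pos.le
          _ = (ν (cylinder W)).toReal := by
              rw [hpowL, mul_div_assoc, div_self (ne_of_gt h2pos), mul_one]
      rw [ENNReal.ofReal_le_iff_le_toReal (measure_ne_top ν _)]
      exact hfinal
    have hε : (0 : ENNReal) < ENNReal.ofReal c⁻¹ := ENNReal.ofReal_pos.2 (by positivity)
    obtain ⟨p, hp1, y, hyper, hmy⟩ :=
      exists_periodic_atom ν hνerg.toMeasurePreserving.map_eq hε key
    rw [hatomless y] at hmy
    exact absurd (le_antisymm hmy zero_le) (ne_of_gt hε)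
  · -- Case Δ < 0 : the all-zero cylinders have κ-measure bounded below
    have hPle : P ≤ s0 - V0 := by
      have hDΔ : D * Δ ≤ 0 := mul_nonpos_of_nonneg_of_nonpos hD0 hΔ.le
      linarith
    set yb : FullShift := fun _ => 0 with hyb
    have hybhc : yb ∈ hereditaryClosure X := zero_mem_hereditaryClosure hne
    have key' : ∀ n : ℕ, ∃ W : Fin n → Fin 2, ENNReal.ofReal c⁻¹ ≤ κ (cylinder W) := by
      intro n
      refine ⟨wordAt yb n, ?_⟩
      have hword : wordAt yb n = (fun _ : Fin n => (0 : Fin 2)) := rfl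
      have hκpos : 0 < κ (cylinder (wordAt yb n)) := by
        rw [hword]
        exact kappa_zero_word_pos hB hκ n hq0
      have hlow := gibbs_lower_mul (hG n yb hybhc hκpos).1
      have hS : ((ones (wordAt yb n) : ℕ):ℝ) * (s1 - V1) +
          ((n:ℝ) - ((ones (wordAt yb n) : ℕ):ℝ)) * (s0 - V0) ≤ birkhoff φ n yb :=
        birkhoff_ge hinv φ hlb0 hlb1 hybhc n
      have hones0 : ones (wordAt yb n) = 0 := by
        rw [hword]
        exact ones_zero_word n
      rw [hones0] at hS
      have hS' : (n:ℝ) * (s0 - V0) ≤ birkhoff φ n yb := by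
        simpa using hS
      have hn0 : (0:ℝ) ≤ (n:ℝ) := by positivity
      have hexp : 0 ≤ birkhoff φ n yb - (n:ℝ) * P := by
        have h2 : (n:ℝ) * P ≤ (n:ℝ) * (s0 - V0) := mul_le_mul_of_nonneg_left hPle hn0
        linarith
      have hfinal : c⁻¹ ≤ (κ (cylinder (wordAt yb n))).toReal := by
        have hc0 : (0:ℝ) ≤ c⁻¹ := by positivity
        calc c⁻¹ = c⁻¹ * 1 := (mul_one _).symm
          _ ≤ c⁻¹ * (2:ℝ) ^ (birkhoff φ n yb - (n:ℝ) * P) :=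
              mul_le_mul_of_nonneg_left (one_le_two_rpow hexp) hc0
          _ ≤ (κ (cylinder (wordAt yb n))).toReal := hlow
      rw [ENNReal.ofReal_le_iff_le_toReal (measure_ne_top κ _)]
      exact hfinal
    have hε : (0 : ENNReal) < ENNReal.ofReal c⁻¹ := ENNReal.ofReal_pos.2 (by positivity)
    obtain ⟨p, hp1, y, hyper, hmy⟩ :=
      exists_periodic_atom κ hκerg.toMeasurePreserving.map_eq hε key'
    by_cases hy1 : ∃ i : ℤ, y i = 1
    · -- the atom has infinitely many ones in the future: κ of its cylinders tends to 0
      obtain ⟨i0, hi0⟩ := hy1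
      have hstep : ∀ j : ℤ, y (j + (p:ℤ)) = y j := by
        intro j
        have := congrFun hyper j
        rwa [shift_iterate_apply] at this
      have hrep : ∀ k : ℕ, ∀ j : ℤ, y (j + (k * p : ℕ)) = y j := by
        intro k
        induction k with
        | zero => intro j; simp
        | succ k ih =>
          intro j
          have h1 : (j + ((k+1) * p : ℕ) : ℤ) = (j + (k * p : ℕ)) + (p:ℤ) := by
            push_cast
            ring
          rw [h1, hstep, ih]
      have hcount : ∀ m : ℕ, ∃ n : ℕ, m ≤ ones (wordAt y n) :=
        fun m => ones_ge_of_periodic_one hp1 hi0 hrep m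
      obtain ⟨m, hm⟩ := exists_pow_lt_of_lt_one (show (0:ℝ) < c⁻¹ by positivity) hq1'
      obtain ⟨n, hn⟩ := hcount m
      have h1 : κ {y} ≤ κ (cylinder (wordAt y n)) := by
        apply measure_mono
        intro z hz
        rw [Set.mem_singleton_iff] at hz
        rw [hz]
        exact mem_cylinder_wordAt y n
      have h2 : κ (cylinder (wordAt y n)) ≤
          ENNReal.ofReal ((1 - q) ^ (ones (wordAt y n))) :=
        kappa_cyl_le_B hB hκ (wordAt y n) hq0 hq1
      have h3 : ((1 - q):ℝ) ^ (ones (wordAt y n)) ≤ (1 - q) ^ m :=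
        pow_le_pow_of_le_one (by linarith) (by linarith) hn
      have hchain : ENNReal.ofReal c⁻¹ ≤ ENNReal.ofReal ((1 - q) ^ m) := by
        calc ENNReal.ofReal c⁻¹ ≤ κ {y} := hmy
          _ ≤ κ (cylinder (wordAt y n)) := h1
          _ ≤ ENNReal.ofReal ((1 - q) ^ (ones (wordAt y n))) := h2
          _ ≤ ENNReal.ofReal ((1 - q) ^ m) := ENNReal.ofReal_le_ofReal h3
      rw [ENNReal.ofReal_le_ofReal_iff (by positivity)] at hchain
      linarith
    · -- the atom is the all-zero point
      have hy0 : y = yb := by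
        funext j
        exact fin2_ne_one (fun h => hy1 ⟨j, h⟩)
      rw [hy0] at hmy
      have hmeas : MeasurableSet ({yb} : Set FullShift) := measurableSet_singleton yb
      have hinvy : shift ⁻¹' ({yb} : Set FullShift) = {yb} := by
        ext z
        simp only [Set.mem_preimage, Set.mem_singleton_iff]
        constructor
        · intro h
          funext j
          have := congrFun h (j - 1)
          simpa [shift, hyb] using this
        · intro h
          rw [h]
          funext j
          rfl
      rcases hκerg.toPreErgodic.measure_self_or_compl_eq_zero hmeas hinvy with h0 | h1
      · rw [h0] at hmy
        exact absurd (le_antisymm hmy zero_le) (ne_of_gt hε)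
      · -- full measure at the fixed point forces ν to be atomic
        have hcyl1 : κ (cylinder (![1] : Fin 1 → Fin 2)) = 0 := by
          apply measure_mono_null ?_ h1
          intro z hz
          simp only [Set.mem_compl_iff, Set.mem_singleton_iff]
          intro hzy
          have h1' : z 0 = 1 := mem_oneCyl_iff.1 hz
          rw [hzy] at h1'
          exact absurd h1' (by decide)
        have hpre : Qmul ⁻¹' cylinder (![1] : Fin 1 → Fin 2) =
            (cylinder (![1] : Fin 1 → Fin 2)) ×ˢ (cylinder (![1] : Fin 1 → Fin 2)) := by
          ext ⟨a, b⟩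
          simp only [Set.mem_preimage, Set.mem_prod]
          constructor
          · intro h
            have h0 : a 0 * b 0 = 1 := by
              have := h 0
              simpa [Qmul] using this
            obtain ⟨ha, hb⟩ := fin2_mul_eq_one h0
            exact ⟨mem_oneCyl_iff.2 ha, mem_oneCyl_iff.2 hb⟩
          · rintro ⟨ha, hb⟩
            intro i
            fin_cases i
            have ha' : a 0 = 1 := mem_oneCyl_iff.1 ha
            have hb' : b 0 = 1 := mem_oneCyl_iff.1 hb
            show a 0 * b 0 = 1
            rw [ha', hb']
            decide
        have hprod : κ (cylinder (![1] : Fin 1 → Fin 2)) =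
            ν (cylinder (![1] : Fin 1 → Fin 2)) * B (cylinder (![1] : Fin 1 → Fin 2)) := by
          rw [kappa_apply hκ, hpre]
          exact Measure.prod_prod _ _
        have hB1 : B (cylinder (![1] : Fin 1 → Fin 2)) ≠ 0 := by
          rw [B_cyl hB, zeros_one_word, ones_one_word]
          simp only [ne_eq, ENNReal.ofReal_eq_zero, not_le]
          nlinarith
        have hν1 : ν (cylinder (![1] : Fin 1 → Fin 2)) = 0 := by
          rw [hprod] at hcyl1
          rcases mul_eq_zero.1 hcyl1 with h | h
          · exact h
          · exact absurd h hB1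
        have mpν : MeasurePreserving shift ν ν := hνerg.toMeasurePreserving
        have hcoord : ∀ j : ℤ, ν {z : FullShift | z j = 1} = 0 := by
          intro j
          rcases le_or_gt 0 j with hj | hj
          · have hset : {z : FullShift | z j = 1} =
                shift^[j.toNat] ⁻¹' cylinder (![1] : Fin 1 → Fin 2) := by
              ext z
              rw [Set.mem_preimage, mem_oneCyl_iff, shift_iterate_apply, zero_add,
                Int.toNat_of_nonneg hj]
              rfl
            rw [hset, (mpν.iterate j.toNat).measure_preimage
              (measurableSet_cylinder _).nullMeasurableSet, hν1]
          · have hset : {z : FullShift | z j = 1} =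
                shiftInv^[(-j).toNat] ⁻¹' cylinder (![1] : Fin 1 → Fin 2) := by
              ext z
              rw [Set.mem_preimage, mem_oneCyl_iff, shiftInv_iterate_apply, zero_sub,
                Int.toNat_of_nonneg (by omega), neg_neg]
              rfl
            rw [hset, ((measurePreserving_shiftInv mpν.map_eq).iterate
              (-j).toNat).measure_preimage (measurableSet_cylinder _).nullMeasurableSet, hν1]
        have hUmeas : MeasurableSet {z : FullShift | ∃ j : ℤ, z j = 1} := by
          have : {z : FullShift | ∃ j : ℤ, z j = 1} = ⋃ j : ℤ, {z : FullShift | z j = 1} := by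
            ext z
            simp
          rw [this]
          exact MeasurableSet.iUnion fun j =>
            (measurable_pi_apply j) (measurableSet_singleton 1)
        have huni : ν {z : FullShift | ∃ j : ℤ, z j = 1} = 0 := by
          have he : {z : FullShift | ∃ j : ℤ, z j = 1} = ⋃ j : ℤ, {z : FullShift | z j = 1} := by
            ext z
            simp
          rw [he]
          exact measure_iUnion_null hcoord
        have hybfull : ν {yb} = 1 := by
          have hcompl : ({yb} : Set FullShift) = {z : FullShift | ∃ j : ℤ, z j = 1}ᶜ := by
            ext z
            simp only [Set.mem_singleton_iff, Set.mem_compl_iff, Set.mem_setOf_eq, not_exists]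
            constructor
            · intro h j
              rw [h]
              show ¬ (0 : Fin 2) = 1
              decide
            · intro h
              funext j
              exact fin2_ne_one (h j)
          rw [hcompl, measure_compl hUmeas (measure_ne_top ν _), huni, measure_univ]
          simp
        rw [hatomless yb] at hybfull
        exact absurd hybfull (by norm_num)
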